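/- The group ⟨α, β, y | α = y⁻³β², [β, y³] = 1, α = 1, βαβ = 1⟩ is isomorphic to the free product Z₂ * Z₃ ≅ PSL(2, Z). -/

import Mathlib

open Multiplicative

/-- `⟨α, β, y | α = y⁻³β², [β, y³] = 1, α = 1, βαβ = 1⟩`,
generators `α = of 0`, `β = of 1`, `y = of 2`. -/
def relsStmt19 : Set (FreeGroup (Fin 3)) :=
  let a := FreeGroup.of (0 : Fin 3)
  let b := FreeGroup.of (1 : Fin 3)
  let y := FreeGroup.of (2 : Fin 3)
  {a * ((y ^ 3)⁻¹ * b ^ 2)⁻¹,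
   b * y ^ 3 * b⁻¹ * (y ^ 3)⁻¹,
   a,
   b * a * b}


section Helpers

variable {G : Type*} [Group G]

/-- Hom out of `Multiplicative (ZMod n)` determined by an element whose `n`-th power is 1. -/
def zmodHom (n : ℕ) (g : G) (hg : g ^ (n : ℤ) = 1) : Multiplicative (ZMod n) →* G :=
  AddMonoidHom.toMultiplicativeLeft
    (ZMod.lift n ⟨zmultiplesHom (Additive G) (Additive.ofMul g), by
      simpa [← ofMul_zpow] using congrArg Additive.ofMul hg⟩)

lemma zmodHom_intCast (n : ℕ) (g : G) (hg : g ^ (n : ℤ) = 1) (k : ℤ) :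
    zmodHom n g hg (ofAdd ((k : ZMod n))) = g ^ k := by
  simp [zmodHom, AddMonoidHom.toMultiplicativeLeft_apply_apply, ZMod.lift_coe, ← ofMul_zpow]

lemma zmodHom_one (n : ℕ) (g : G) (hg : g ^ (n : ℤ) = 1) :
    zmodHom n g hg (ofAdd (1 : ZMod n)) = g := by
  have := zmodHom_intCast n g hg 1
  simpa using this

/-- Homs out of `Multiplicative (ZMod n)` are determined by the value at `ofAdd 1`. -/
lemma zmodHom_ext {n : ℕ} [NeZero n] {M : Type*} [Monoid M]
    {f g : Multiplicative (ZMod n) →* M}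
    (h : f (ofAdd (1 : ZMod n)) = g (ofAdd (1 : ZMod n))) : f = g := by
  refine MonoidHom.ext fun x => ?_
  have hx : x = (ofAdd (1 : ZMod n)) ^ (ZMod.val (n := n) (toAdd x)) := by
    rw [← ofAdd_nsmul]
    simp [nsmul_eq_mul, ZMod.natCast_rightInverse (toAdd x)]
  rw [hx, map_pow, map_pow, h]

end Helpers

section PartA

abbrev CC2 := Multiplicative (ZMod 2)
abbrev CC3 := Multiplicative (ZMod 3)

local notation "PG" => PresentedGroup relsStmt19

namespace Rels19

lemma rel_holds (r : FreeGroup (Fin 3)) (hr : r ∈ relsStmt19) :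
    PresentedGroup.mk relsStmt19 r = 1 :=
  (QuotientGroup.eq_one_iff _).mpr (Subgroup.subset_normalClosure hr)


open PresentedGroup

lemma ha : (PresentedGroup.of (rels := relsStmt19) 0) = 1 := by
  simpa [PresentedGroup.of] using rel_holds (FreeGroup.of 0) (by simp [relsStmt19])

lemma hbab : (PresentedGroup.of (rels := relsStmt19) 1) *
    (PresentedGroup.of (rels := relsStmt19) 0) * (PresentedGroup.of (rels := relsStmt19) 1) = 1 := by
  exact rel_holds
    (FreeGroup.of 1 * FreeGroup.of 0 * FreeGroup.of 1) (by simp [relsStmt19])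

lemma hb2 : (PresentedGroup.of (rels := relsStmt19) 1) ^ 2 = 1 := by
  have h := hbab
  rw [ha, mul_one] at h
  simpa [sq] using h

lemma hrel1 : (PresentedGroup.of (rels := relsStmt19) 0) *
    (((PresentedGroup.of (rels := relsStmt19) 2) ^ 3)⁻¹ *
      (PresentedGroup.of (rels := relsStmt19) 1) ^ 2)⁻¹ = 1 := by
  exact rel_holds
    (FreeGroup.of 0 * (((FreeGroup.of 2) ^ 3)⁻¹ * (FreeGroup.of 1) ^ 2)⁻¹)
    (by simp [relsStmt19])

lemma hy3 : (PresentedGroup.of (rels := relsStmt19) 2) ^ 3 = 1 := by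
  have h := hrel1
  rw [ha, hb2, one_mul, mul_one, inv_inv] at h
  exact h

/-- images of the generators in `CC2 ∗ CC3`. -/
def genImg : Fin 3 → Monoid.Coprod CC2 CC3 :=
  ![1, Monoid.Coprod.inl (ofAdd (1 : ZMod 2)), Monoid.Coprod.inr (ofAdd (1 : ZMod 3))]

lemma genImg_rels : ∀ r ∈ relsStmt19, FreeGroup.lift genImg r = 1 := by
  intro r hr
  have h2 : (Monoid.Coprod.inl (ofAdd (1 : ZMod 2)) : Monoid.Coprod CC2 CC3) ^ 2 = 1 := by
    rw [← map_pow]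
    norm_num [show (ofAdd (1 : ZMod 2)) ^ 2 = 1 by decide]
  have h3 : (Monoid.Coprod.inr (ofAdd (1 : ZMod 3)) : Monoid.Coprod CC2 CC3) ^ 3 = 1 := by
    rw [← map_pow]
    norm_num [show (ofAdd (1 : ZMod 3)) ^ 3 = 1 by decide]
  simp only [relsStmt19, Set.mem_insert_iff, Set.mem_singleton_iff] at hr
  rcases hr with rfl | rfl | rfl | rfl <;>
    simp [genImg, ← pow_two, h2, h3, map_mul, map_inv, map_pow]

/-- The forward homomorphism. -/
def fwd : PresentedGroup relsStmt19 →* Monoid.Coprod CC2 CC3 :=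
  PresentedGroup.toGroup genImg_rels

lemma hb2' : (PresentedGroup.of (rels := relsStmt19) 1) ^ ((2 : ℕ) : ℤ) = 1 :=
  (zpow_natCast _ 2).trans hb2

lemma hy3' : (PresentedGroup.of (rels := relsStmt19) 2) ^ ((3 : ℕ) : ℤ) = 1 :=
  (zpow_natCast _ 3).trans hy3

/-- The backward homomorphism. -/
def bwd : Monoid.Coprod CC2 CC3 →* PresentedGroup relsStmt19 :=
  Monoid.Coprod.lift (zmodHom 2 _ hb2') (zmodHom 3 _ hy3')

lemma bwd_fwd : bwd.comp fwd = MonoidHom.id _ := by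
  ext x
  fin_cases x
  · show bwd (fwd (PresentedGroup.of 0)) = PresentedGroup.of 0
    rw [ha]
    simp [fwd, genImg, PresentedGroup.toGroup.of]
  · show bwd (fwd (PresentedGroup.of 1)) = PresentedGroup.of 1
    rw [show fwd (PresentedGroup.of 1) = Monoid.Coprod.inl (ofAdd (1 : ZMod 2)) from
      (PresentedGroup.toGroup.of genImg_rels).trans rfl]
    simpa [bwd] using zmodHom_one 2 _ hb2'
  · show bwd (fwd (PresentedGroup.of 2)) = PresentedGroup.of 2
    rw [show fwd (PresentedGroup.of 2) = Monoid.Coprod.inr (ofAdd (1 : ZMod 3)) from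
      (PresentedGroup.toGroup.of genImg_rels).trans rfl]
    simpa [bwd] using zmodHom_one 3 _ hy3'

lemma fwd_bwd : fwd.comp bwd = MonoidHom.id _ := by
  apply Monoid.Coprod.hom_ext
  · apply zmodHom_ext
    show fwd (bwd (Monoid.Coprod.inl (ofAdd (1 : ZMod 2)))) = Monoid.Coprod.inl (ofAdd (1 : ZMod 2))
    rw [show bwd (Monoid.Coprod.inl (ofAdd (1 : ZMod 2))) = PresentedGroup.of 1 by
      simpa [bwd] using zmodHom_one 2 _ hb2']
    simp [fwd, genImg, PresentedGroup.toGroup.of]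
  · apply zmodHom_ext
    show fwd (bwd (Monoid.Coprod.inr (ofAdd (1 : ZMod 3)))) = Monoid.Coprod.inr (ofAdd (1 : ZMod 3))
    rw [show bwd (Monoid.Coprod.inr (ofAdd (1 : ZMod 3))) = PresentedGroup.of 2 by
      simpa [bwd] using zmodHom_one 3 _ hy3']
    simp [fwd, genImg, PresentedGroup.toGroup.of]

/-- The first isomorphism. -/
def equivCoprod : PresentedGroup relsStmt19 ≃* Monoid.Coprod CC2 CC3 :=
  MonoidHom.toMulEquiv fwd bwd bwd_fwd fwd_bwd

end Rels19

end PartA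

section PartB

open Monoid

/-- Index family for the free product over `Bool`. -/
def HH : Bool → Type := fun b => Bool.rec CC3 CC2 b

instance instGroupHH : ∀ b, Group (HH b) := fun b =>
  Bool.rec (inferInstanceAs (Group CC3)) (inferInstanceAs (Group CC2)) b

/-- `Coprod → CoprodI`. -/
def toCI : Coprod CC2 CC3 →* CoprodI HH :=
  Coprod.lift (CoprodI.of (M := HH) (i := true)) (CoprodI.of (M := HH) (i := false))

/-- `CoprodI → Coprod`. -/
def ofCI : CoprodI HH →* Coprod CC2 CC3 :=
  CoprodI.lift (fun b => Bool.rec (motive := fun b => HH b →* Coprod CC2 CC3)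
    Coprod.inr Coprod.inl b)

lemma ofCI_toCI : ofCI.comp toCI = MonoidHom.id _ := by
  apply Coprod.hom_ext <;> ext x <;>
    simp only [MonoidHom.comp_apply, MonoidHom.id_apply, toCI, ofCI,
      Coprod.lift_apply_inl, Coprod.lift_apply_inr, CoprodI.lift_of] <;> rfl

lemma toCI_ofCI : toCI.comp ofCI = MonoidHom.id _ := by
  apply CoprodI.ext_hom
  intro i
  cases i <;> ext x <;>
    simp only [MonoidHom.comp_apply, MonoidHom.id_apply, toCI, ofCI, CoprodI.lift_of] <;> rfl

/-- `Coprod CC2 CC3 ≃* CoprodI HH`. -/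
def coprodEquivCoprodI : Coprod CC2 CC3 ≃* CoprodI HH :=
  MonoidHom.toMulEquiv toCI ofCI ofCI_toCI toCI_ofCI

end PartB

section SL2

open Matrix ModularGroup Monoid

local notation "SL2Z" => Matrix.SpecialLinearGroup (Fin 2) ℤ
local notation "PSL" => SL2Z ⧸ Subgroup.center SL2Z

/-- Irrational real numbers. -/
def Irr : Type := {x : ℝ // Irrational x}

lemma detR (A : SL2Z) :
    (A.1 0 0 : ℝ) * A.1 1 1 - A.1 0 1 * A.1 1 0 = 1 := by
  have h := A.2
  rw [Matrix.det_fin_two] at h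
  exact_mod_cast congrArg (fun z : ℤ => (z : ℝ)) h

/-- The Möbius transformation associated to `A`. -/
noncomputable def moeb (A : SL2Z) (x : ℝ) : ℝ :=
  ((A.1 0 0 : ℝ) * x + A.1 0 1) / ((A.1 1 0 : ℝ) * x + A.1 1 1)

lemma moeb_denom_ne (A : SL2Z) {x : ℝ} (hx : Irrational x) :
    (A.1 1 0 : ℝ) * x + A.1 1 1 ≠ 0 := by
  rcases eq_or_ne (A.1 1 0) 0 with hc | hc
  · have had : A.1 0 0 * A.1 1 1 = 1 := by
      have h := A.2
      rw [Matrix.det_fin_two, hc] at h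
      linarith
    have hd : A.1 1 1 ≠ 0 := by rintro h0; rw [h0] at had; simp at had
    rw [hc]
    simpa using hd
  · intro h0
    apply hx
    refine ⟨(-(A.1 1 1 : ℚ)) / (A.1 1 0 : ℚ), ?_⟩
    have hcR : (A.1 1 0 : ℝ) ≠ 0 := Int.cast_ne_zero.mpr hc
    have hcQ : ((A.1 1 0 : ℤ) : ℚ) ≠ 0 := Int.cast_ne_zero.mpr hc
    push_cast
    field_simp
    linarith [h0]

lemma div_div_div_cancel {p q r : ℝ} (hr : r ≠ 0) : (p / r) / (q / r) = p / q := by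
  rcases eq_or_ne q 0 with rfl | hq
  · simp
  · field_simp

lemma x_rat {a b c d q x : ℝ} (hdet : a * d - b * c = 1) (hden : c * x + d ≠ 0)
    (hq : q = (a * x + b) / (c * x + d)) :
    a - q * c ≠ 0 ∧ x = (q * d - b) / (a - q * c) := by
  have hq' : q * (c * x + d) = a * x + b := by rw [hq, div_mul_cancel₀ _ hden]
  have hne : a - q * c ≠ 0 := by
    intro h0
    have hb : b = q * d := by linear_combination -hq' - x * h0
    exact one_ne_zero (α := ℝ) (by linear_combination -hdet + d * h0 - c * hb)
  refine ⟨hne, ?_⟩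
  rw [eq_div_iff hne]
  linear_combination -hq'

lemma moeb_irrational (A : SL2Z) {x : ℝ} (hx : Irrational x) :
    Irrational (moeb A x) := by
  rintro ⟨q, hq⟩
  obtain ⟨hne, hx'⟩ := x_rat (detR A) (moeb_denom_ne A hx) hq
  apply hx
  refine ⟨((q : ℚ) * (A.1 1 1 : ℚ) - (A.1 0 1 : ℚ)) / ((A.1 0 0 : ℚ) - (q : ℚ) * (A.1 1 0 : ℚ)), ?_⟩
  push_cast
  exact hx'.symm

lemma moeb_comp {a b c d e f g h x : ℝ} (h1 : g * x + h ≠ 0) :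
    (a * ((e * x + f) / (g * x + h)) + b) / (c * ((e * x + f) / (g * x + h)) + d)
      = ((a * e + b * g) * x + (a * f + b * h)) / ((c * e + d * g) * x + (c * f + d * h)) := by
  have h3 : c * ((e * x + f) / (g * x + h)) + d
      = ((c * e + d * g) * x + (c * f + d * h)) / (g * x + h) := by
    rw [mul_div_assoc', div_add' _ _ _ h1]; ring
  have h4 : a * ((e * x + f) / (g * x + h)) + b
      = ((a * e + b * g) * x + (a * f + b * h)) / (g * x + h) := by
    rw [mul_div_assoc', div_add' _ _ _ h1]; ring
  rw [h3, h4, div_div_div_cancel h1]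

lemma moeb_one (x : ℝ) : moeb 1 x = x := by
  simp [moeb, Matrix.SpecialLinearGroup.coe_one, Matrix.one_apply]

lemma moeb_mul (A B : SL2Z) {x : ℝ} (hx : Irrational x) :
    moeb (A * B) x = moeb A (moeb B x) := by
  have hdB := moeb_denom_ne B hx
  unfold moeb
  simp only [Matrix.SpecialLinearGroup.coe_mul, Matrix.mul_apply, Fin.sum_univ_two]
  push_cast
  exact (moeb_comp hdB).symm

/-- The Möbius action of `SL(2, ℤ)` on the irrationals. -/
noncomputable instance : MulAction SL2Z Irr where
  smul A x := ⟨moeb A x.1, moeb_irrational A x.2⟩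
  one_smul x := Subtype.ext (moeb_one x.1)
  mul_smul A B x := Subtype.ext (moeb_mul A B x.2)

lemma smul_irr_coe (A : SL2Z) (x : Irr) : (A • x).1 = moeb A x.1 := rfl

/-- Central elements of `SL(2, ℤ)` act trivially on the irrationals. -/
lemma center_act_trivial : ∀ z ∈ Subgroup.center SL2Z,
    MulAction.toPermHom SL2Z Irr z = 1 := by
  intro z hz
  obtain ⟨r, hr2, hrz⟩ := Matrix.SpecialLinearGroup.mem_center_iff.mp hz
  have entry : ∀ i j, Matrix.scalar (Fin 2) r i j = z.1 i j := fun i j =>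
    congrFun (congrFun hrz i) j
  have h00 : z.1 0 0 = r := by
    have := entry 0 0; rw [Matrix.scalar_apply, Matrix.diagonal_apply_eq] at this; exact this.symm
  have h01 : z.1 0 1 = 0 := by
    have := entry 0 1; rw [Matrix.scalar_apply, Matrix.diagonal_apply_ne _ (by decide)] at this; exact this.symm
  have h10 : z.1 1 0 = 0 := by
    have := entry 1 0; rw [Matrix.scalar_apply, Matrix.diagonal_apply_ne _ (by decide)] at this; exact this.symm
  have h11 : z.1 1 1 = r := by
    have := entry 1 1; rw [Matrix.scalar_apply, Matrix.diagonal_apply_eq] at this; exact this.symm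
  have hrr : r * r = 1 := by
    have := hr2
    rw [Fintype.card_fin, pow_two] at this
    exact this
  have hrne : (r : ℝ) ≠ 0 := by
    rcases Int.eq_one_or_neg_one_of_mul_eq_one' hrr with ⟨h1, _⟩ | ⟨h1, _⟩ <;>
      rw [h1] <;> norm_num
  ext x
  refine Subtype.ext ?_
  show moeb z x.1 = x.1
  rw [moeb, h00, h01, h10, h11]
  push_cast
  rw [zero_mul, zero_add, add_zero, mul_div_assoc]
  field_simp

/-- The action of `PSL(2, ℤ)` on the irrationals. -/
noncomputable def pslPerm : PSL →* Equiv.Perm Irr :=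
  QuotientGroup.lift _ (MulAction.toPermHom SL2Z Irr) center_act_trivial

noncomputable instance : MulAction PSL Irr := MulAction.compHom Irr pslPerm

/-- The projection onto `PSL(2, ℤ)`. -/
def toPSL : SL2Z →* PSL := QuotientGroup.mk' _

lemma psl_smul (A : SL2Z) (x : Irr) : toPSL A • x = A • x := rfl

end SL2

section Gen

open Matrix ModularGroup

local notation "SL2Z" => Matrix.SpecialLinearGroup (Fin 2) ℤ

lemma neg_one_eq_S_mul_S : (-1 : SL2Z) = ModularGroup.S * ModularGroup.S :=
  Subtype.ext (by rw [Matrix.SpecialLinearGroup.coe_mul, S_mul_S_eq]; rfl)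

lemma SL2_mem_closure (A : SL2Z) :
    A ∈ Subgroup.closure ({ModularGroup.S, ModularGroup.T} : Set SL2Z) := by
  set Hc := Subgroup.closure ({ModularGroup.S, ModularGroup.T} : Set SL2Z) with hHc
  have hS : ModularGroup.S ∈ Hc := Subgroup.subset_closure (Or.inl rfl)
  have hT : ModularGroup.T ∈ Hc := Subgroup.subset_closure (Or.inr rfl)
  have hneg : (-1 : SL2Z) ∈ Hc := by
    rw [neg_one_eq_S_mul_S]
    exact Hc.mul_mem hS hS
  suffices H : ∀ n : ℕ, ∀ A : SL2Z, (A.1 1 0).natAbs = n → A ∈ Hc from H _ A rfl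
  intro n
  induction n using Nat.strong_induction_on with
  | _ n ih =>
    intro A hA
    rcases eq_or_ne (A.1 1 0) 0 with hc | hc
    · have had : A.1 0 0 * A.1 1 1 = 1 := by
        have h := A.2
        rw [Matrix.det_fin_two, hc] at h
        linarith
      rcases Int.eq_one_or_neg_one_of_mul_eq_one' had with ⟨h1, h2⟩ | ⟨h1, h2⟩
      · have hAT : A = ModularGroup.T ^ (A.1 0 1) := by
          ext i j
          fin_cases i <;> fin_cases j <;>
            simp [coe_T_zpow, h1, h2, hc]
        rw [hAT]
        exact Hc.zpow_mem hT _
      · have hAT : A = -1 * ModularGroup.T ^ (-A.1 0 1) := by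
          ext i j
          fin_cases i <;> fin_cases j <;>
            simp [coe_T_zpow, h1, h2, hc, Matrix.SpecialLinearGroup.coe_mul]
        rw [hAT]
        exact Hc.mul_mem hneg (Hc.zpow_mem hT _)
    · set k : ℤ := -(A.1 0 0 / A.1 1 0) with hk
      have hrow : ((ModularGroup.S * (ModularGroup.T ^ k * A)).1 1 0) = A.1 0 0 % A.1 1 0 := by
        rw [Matrix.SpecialLinearGroup.coe_mul, Matrix.SpecialLinearGroup.coe_mul, coe_T_zpow]
        rw [Matrix.mul_apply, Fin.sum_univ_two, Matrix.mul_apply, Matrix.mul_apply,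
          Fin.sum_univ_two, Fin.sum_univ_two]
        simp [ModularGroup.coe_S, Int.emod_def, hk]
        ring
      have hlt : (A.1 0 0 % A.1 1 0).natAbs < n := by
        have h1 := Int.emod_nonneg (A.1 0 0) hc
        have h2 := Int.emod_lt (A.1 0 0) hc
        omega
      have hmem := ih _ (hrow ▸ hlt) _ rfl
      have hAfac : A = (ModularGroup.T ^ k)⁻¹ *
          (ModularGroup.S⁻¹ * (ModularGroup.S * (ModularGroup.T ^ k * A))) := by
        group
      rw [hAfac]
      exact Hc.mul_mem (Hc.inv_mem (Hc.zpow_mem hT _))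
        (Hc.mul_mem (Hc.inv_mem hS) hmem)

end Gen

section Final

open Matrix ModularGroup Monoid Multiplicative

local notation "SL2Z" => Matrix.SpecialLinearGroup (Fin 2) ℤ
local notation "PSL" => SL2Z ⧸ Subgroup.center SL2Z

/-- The matrix `B = T * S = [[1,-1],[1,0]]`, of order 3 in `PSL(2,ℤ)`. -/
def Bmat : SL2Z := ModularGroup.T * ModularGroup.S

lemma coe_B : (Bmat : Matrix (Fin 2) (Fin 2) ℤ) = !![1, -1; 1, 0] := by
  rw [Bmat, Matrix.SpecialLinearGroup.coe_mul, coe_T, coe_S]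
  norm_num [Matrix.mul_fin_two]

lemma coe_B2 : ((Bmat * Bmat : SL2Z) : Matrix (Fin 2) (Fin 2) ℤ) = !![0, -1; 1, -1] := by
  rw [Matrix.SpecialLinearGroup.coe_mul, coe_B]
  norm_num [Matrix.mul_fin_two]

lemma neg_one_mat : ((-1 : SL2Z) : Matrix (Fin 2) (Fin 2) ℤ) = !![-1, 0; 0, -1] := by
  have : ((-1 : SL2Z) : Matrix (Fin 2) (Fin 2) ℤ) = -(1 : Matrix (Fin 2) (Fin 2) ℤ) := rfl
  rw [this, Matrix.one_fin_two]
  norm_num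

lemma B_cube : Bmat ^ 3 = (-1 : SL2Z) := by
  apply Subtype.ext
  rw [show Bmat ^ 3 = Bmat * Bmat * Bmat by rw [pow_succ, pow_two], Matrix.SpecialLinearGroup.coe_mul, coe_B2,
    coe_B, neg_one_mat]
  norm_num [Matrix.mul_fin_two]

lemma neg_one_mem_center : (-1 : SL2Z) ∈ Subgroup.center SL2Z := by
  refine Matrix.SpecialLinearGroup.mem_center_iff.mpr ⟨-1, by norm_num, ?_⟩
  rw [neg_one_mat]
  ext i j
  fin_cases i <;> fin_cases j <;>
    simp [Matrix.scalar_apply, Matrix.diagonal_apply]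

/-- The projection of `S`. -/
def pS : PSL := toPSL ModularGroup.S

/-- The projection of `B`. -/
def pB : PSL := toPSL Bmat

lemma hS2 : pS ^ ((2 : ℕ) : ℤ) = 1 := by
  rw [zpow_natCast, pS, ← map_pow, show ModularGroup.S ^ 2 = (-1 : SL2Z) by
    rw [pow_two, ← neg_one_eq_S_mul_S]]
  exact (QuotientGroup.eq_one_iff _).mpr neg_one_mem_center

lemma hB3 : pB ^ ((3 : ℕ) : ℤ) = 1 := by
  rw [zpow_natCast, pB, ← map_pow, B_cube]
  exact (QuotientGroup.eq_one_iff _).mpr neg_one_mem_center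

/-- The family of homomorphisms for the ping-pong lemma. -/
def ff : ∀ b, HH b →* PSL := fun b =>
  Bool.rec (motive := fun b => HH b →* PSL) (zmodHom 3 pB hB3) (zmodHom 2 pS hS2) b

/-- The ping-pong sets: negative irrationals for `S`, positive irrationals for `B`. -/
def XX : Bool → Set Irr := fun b =>
  Bool.rec (motive := fun _ => Set Irr) {x : Irr | 0 < x.1} {x : Irr | x.1 < 0} b

lemma hXne : ∀ i, (XX i).Nonempty := by
  intro i
  have h2 : (0 : ℝ) < Real.sqrt 2 := Real.sqrt_pos.mpr (by norm_num)
  cases i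
  · exact ⟨⟨Real.sqrt 2, irrational_sqrt_two⟩, h2⟩
  · exact ⟨⟨-Real.sqrt 2, irrational_sqrt_two.neg⟩, show -Real.sqrt 2 < 0 by linarith⟩

lemma hXdisj : Pairwise (Function.onFun Disjoint XX) := by
  intro i j hij
  have key : Disjoint (XX true) (XX false) :=
    Set.disjoint_left.mpr fun x (hx : x.1 < 0) (hy : 0 < x.1) => absurd hy (not_lt.mpr hx.le)
  cases i <;> cases j
  · exact absurd rfl hij
  · exact key.symm
  · exact key
  · exact absurd rfl hij

end Final

section Final2

open Matrix ModularGroup Monoid Multiplicative Pointwise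

local notation "SL2Z" => Matrix.SpecialLinearGroup (Fin 2) ℤ
local notation "PSL" => SL2Z ⧸ Subgroup.center SL2Z

lemma psl_smul_coe (A : SL2Z) (x : Irr) : ((toPSL A) • x).1 = moeb A x.1 := rfl

lemma moeb_S (x : ℝ) : moeb ModularGroup.S x = -1 / x := by
  unfold moeb
  rw [coe_S]
  norm_num

lemma moeb_B (x : ℝ) : moeb Bmat x = (x - 1) / x := by
  unfold moeb
  rw [coe_B]
  norm_num
  ring_nf

lemma moeb_B2 (x : ℝ) : moeb (Bmat * Bmat) x = -1 / (x - 1) := by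
  unfold moeb
  rw [coe_B2]
  norm_num
  ring_nf

lemma hpp : Pairwise fun i j => ∀ h : HH i, h ≠ 1 → ff i h • XX j ⊆ XX i := by
  intro i j hij
  cases i <;> cases j
  · exact absurd rfl hij
  · intro h hne
    have hval : ff false h = toPSL Bmat ∨ ff false h = toPSL (Bmat * Bmat) := by
      rcases (show ∀ g : CC3, g ≠ 1 → g = ofAdd (1 : ZMod 3) ∨
          g = ofAdd (1 : ZMod 3) * ofAdd (1 : ZMod 3) by decide) h hne with h1 | h1
      · exact Or.inl (h1 ▸ zmodHom_one 3 pB hB3)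
      · refine Or.inr (h1 ▸ ?_)
        rw [show (ff false (ofAdd (1 : ZMod 3) * ofAdd (1 : ZMod 3)) : PSL)
            = ff false (ofAdd (1 : ZMod 3)) * ff false (ofAdd (1 : ZMod 3)) from
            _root_.map_mul _ _ _,
          show (ff false (ofAdd (1 : ZMod 3)) : PSL) = toPSL Bmat from zmodHom_one 3 pB hB3,
          ← _root_.map_mul]
    rcases hval with hv | hv <;> rintro _ ⟨x, hx, rfl⟩
    · show (0 : ℝ) < ((ff false) h • x).1
      rw [hv, psl_smul_coe, moeb_B]
      have hx' : x.1 < 0 := hx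
      exact div_pos_of_neg_of_neg (by linarith) hx'
    · show (0 : ℝ) < ((ff false) h • x).1
      rw [hv, psl_smul_coe, moeb_B2]
      have hx' : x.1 < 0 := hx
      exact div_pos_of_neg_of_neg (by norm_num) (by linarith)
  · intro h hne
    have hval : ff true h = toPSL ModularGroup.S := by
      rcases (show ∀ g : CC2, g ≠ 1 → g = ofAdd (1 : ZMod 2) by decide) h hne with h1
      exact h1 ▸ zmodHom_one 2 pS hS2
    rintro _ ⟨x, hx, rfl⟩
    show ((ff true) h • x).1 < (0 : ℝ)
    rw [hval, psl_smul_coe, moeb_S]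
    have hx' : (0 : ℝ) < x.1 := hx
    exact div_neg_of_neg_of_pos (by norm_num) hx'
  · exact absurd rfl hij

/-- The lifted homomorphism `CC2 ∗ CC3 → PSL(2, ℤ)` (via `CoprodI`). -/
noncomputable def psi : CoprodI HH →* PSL := CoprodI.lift ff

lemma psi_injective : Function.Injective psi := by
  refine CoprodI.lift_injective_of_ping_pong ff (Or.inr ⟨false, ?_⟩) XX hXne hXdisj hpp
  show (3 : Cardinal) ≤ Cardinal.mk CC3
  rw [Cardinal.mk_fintype]
  norm_num

lemma psi_surjective : Function.Surjective psi := by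
  intro q
  obtain ⟨A, rfl⟩ := QuotientGroup.mk'_surjective (Subgroup.center SL2Z) q
  have hsub : ({ModularGroup.S, ModularGroup.T} : Set SL2Z) ⊆
      (Subgroup.comap toPSL psi.range : Set SL2Z) := by
    have hSr : toPSL ModularGroup.S ∈ psi.range := by
      refine ⟨CoprodI.of (M := HH) (i := true) (ofAdd (1 : ZMod 2)), ?_⟩
      rw [psi]
      exact (CoprodI.lift_of _ _).trans (zmodHom_one 2 pS hS2)
    have hBr : toPSL Bmat ∈ psi.range := by
      refine ⟨CoprodI.of (M := HH) (i := false) (ofAdd (1 : ZMod 3)), ?_⟩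
      rw [psi]
      exact (CoprodI.lift_of _ _).trans (zmodHom_one 3 pB hB3)
    have hTr : toPSL ModularGroup.T ∈ psi.range := by
      have hT : ModularGroup.T = Bmat * ModularGroup.S⁻¹ := by rw [Bmat]; group
      rw [hT, _root_.map_mul, map_inv]
      exact psi.range.mul_mem hBr (psi.range.inv_mem hSr)
    rintro g (rfl | rfl)
    · exact hSr
    · exact hTr
  have := Subgroup.closure_le (Subgroup.comap toPSL psi.range) |>.mpr hsub (SL2_mem_closure A)
  exact this

/-- `CoprodI HH ≃* PSL(2, ℤ)`. -/
noncomputable def psiEquiv : CoprodI HH ≃* PSL :=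
  MulEquiv.ofBijective psi ⟨psi_injective, psi_surjective⟩

end Final2

theorem stmt_19 :
    Nonempty (PresentedGroup relsStmt19 ≃*
      Monoid.Coprod (Multiplicative (ZMod 2)) (Multiplicative (ZMod 3))) ∧
    Nonempty (PresentedGroup relsStmt19 ≃*
      (Matrix.SpecialLinearGroup (Fin 2) ℤ ⧸
        Subgroup.center (Matrix.SpecialLinearGroup (Fin 2) ℤ))) := by
  exact ⟨⟨Rels19.equivCoprod⟩,
    ⟨Rels19.equivCoprod.trans (coprodEquivCoprodI.trans psiEquiv)⟩⟩
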